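/- Let n be a positive integer, f ≥ 1, and let g_1,…,g_f be integers with 0 < g_1 < … < g_f < n/2, and let X be the circulant graph X(Z_n; {±g_1,…,±g_f}). Let v be a vertex with dist(0,v) = l ≥ 2, and suppose there exist integers a_1,…,a_f with Σ_i |a_i| = l, Σ_i a_i g_i ≡ v (mod n), and a_i ≠ 0, a_j ≠ 0 for two distinct indices i ≠ j. Then v has at least two distinct neighbors at distance l−1 from 0; in particular v is not of type T_1. -/

import Mathlib

/-- The circulant graph `X(Z_n; {±g 0, …, ±g (f-1)})`: vertices are `ZMod n`, and distinct
`u, v` are adjacent iff `v - u ≡ ±g i (mod n)` for some `i`. -/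
def circulant (n : ℕ) {f : ℕ} (g : Fin f → ℤ) : SimpleGraph (ZMod n) where
  Adj u v := u ≠ v ∧ ∃ i, v - u = (g i : ZMod n) ∨ u - v = (g i : ZMod n)
  symm := by
    constructor
    rintro u v ⟨hne, i, h | h⟩
    · exact ⟨hne.symm, i, Or.inr h⟩
    · exact ⟨hne.symm, i, Or.inl h⟩
  loopless := by constructor; rintro u ⟨hne, -⟩; exact hne rfl

lemma cast_ne_zero_of_abs_lt {n : ℕ} (c : ℤ) (h0 : c ≠ 0) (h : |c| < n) :
    (c : ZMod n) ≠ 0 := by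
  rw [Ne, ZMod.intCast_zmod_eq_zero_iff_dvd]
  intro hd
  have := Int.le_of_dvd (abs_pos.mpr h0) ((dvd_abs _ _).mpr hd)
  omega

lemma adj_sub_sign {n f : ℕ} (g : Fin f → ℤ) (hpos : ∀ i, 0 < g i)
    (hhalf : ∀ i, 2 * g i < n) (w : ZMod n) (k : Fin f) (s : ℤ) (hs : s = 1 ∨ s = -1) :
    (circulant n g).Adj w (w - ((s * g k : ℤ) : ZMod n)) := by
  have hne : ((s * g k : ℤ) : ZMod n) ≠ 0 := by
    apply cast_ne_zero_of_abs_lt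
    · rcases hs with h | h <;> subst h <;> simp <;> exact (hpos k).ne'
    · have h1 := hpos k; have h2 := hhalf k
      rcases hs with h | h
      · subst h; rw [one_mul, abs_of_pos h1]; omega
      · subst h; rw [neg_one_mul, abs_neg, abs_of_pos h1]; omega
  constructor
  · intro h
    exact hne (sub_eq_self.mp h.symm)
  · refine ⟨k, ?_⟩
    rcases hs with h | h
    · right; subst h; push_cast; ring
    · left; subst h; push_cast; ring


lemma sum_update_comp {f : ℕ} {M : Type*} [AddCommMonoid M] (b : Fin f → ℤ) (k : Fin f)
    (c : ℤ) (G : Fin f → ℤ → M) :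
    ∑ i, G i (Function.update b k c i) = G k c + ∑ i ∈ Finset.univ \ {k}, G i (b i) := by
  rw [Finset.sum_eq_sum_sdiff_singleton_add (Finset.mem_univ k), Function.update_self, add_comm]
  congr 1
  exact Finset.sum_congr rfl fun x hx => by
    rw [Function.update_of_ne (by simpa using (Finset.mem_sdiff.mp hx).2)]

/-- From any representation there is a walk of that length from 0. -/
lemma walk_of_rep {n f : ℕ} (g : Fin f → ℤ) (hpos : ∀ i, 0 < g i)
    (hhalf : ∀ i, 2 * g i < n) :
    ∀ m (b : Fin f → ℤ), (∑ i, (b i).natAbs) = m →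
      ∃ p : (circulant n g).Walk 0 (((∑ i, b i * g i : ℤ) : ZMod n)), p.length = m := by
  intro m
  induction m with
  | zero =>
    intro b hb
    have hz : ∀ i, b i = 0 := by
      intro i
      have := Finset.sum_eq_zero_iff.mp hb i (Finset.mem_univ i)
      omega
    have h0 : ((∑ i, b i * g i : ℤ) : ZMod n) = 0 := by
      rw [Finset.sum_eq_zero fun i _ => by rw [hz i]; ring]; simp
    rw [h0]; exact ⟨SimpleGraph.Walk.nil, rfl⟩
  | succ m ih =>
    intro b hb
    have : ∃ k, b k ≠ 0 := by
      by_contra h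
      push_neg at h
      have h0 : ∑ i, (b i).natAbs = 0 :=
        Finset.sum_eq_zero fun i _ => by rw [h i]; rfl
      omega
    obtain ⟨k, hk⟩ := this
    set s : ℤ := (b k).sign with hs
    have hs1 : s = 1 ∨ s = -1 := by
      rcases Int.lt_or_lt_of_ne hk with h | h
      · right; simp [hs, Int.sign_eq_neg_one_of_neg h]
      · left; simp [hs, Int.sign_eq_one_of_pos h]
    set b' : Fin f → ℤ := Function.update b k (b k - s) with hb'
    have hsum : (∑ i, (b' i).natAbs) = m := by
      rw [hb', sum_update_comp b k (b k - s) (fun _ x => x.natAbs)]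
      have h1 : (b k - s).natAbs = (b k).natAbs - 1 := by
        rcases Int.lt_or_lt_of_ne hk with h | h
        · simp only [hs, Int.sign_eq_neg_one_of_neg h]; omega
        · simp only [hs, Int.sign_eq_one_of_pos h]; omega
      rw [h1]
      have h2 : (∑ i ∈ Finset.univ \ {k}, (b i).natAbs) + (b k).natAbs = m + 1 := by
        rw [← hb, Finset.sum_eq_sum_sdiff_singleton_add (Finset.mem_univ k)]
      omega
    have hval : (∑ i, b' i * g i : ℤ) = (∑ i, b i * g i : ℤ) - s * g k := by
      rw [hb', sum_update_comp b k (b k - s) (fun i x => x * g i),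
        Finset.sum_eq_sum_sdiff_singleton_add (Finset.mem_univ k) (fun i => b i * g i)]
      ring
    obtain ⟨p, hp⟩ := ih b' hsum
    have hadj := adj_sub_sign g hpos hhalf (((∑ i, b i * g i : ℤ) : ZMod n)) k s hs1
    have heq : ((∑ i, b i * g i : ℤ) : ZMod n) - ((s * g k : ℤ) : ZMod n)
        = ((∑ i, b' i * g i : ℤ) : ZMod n) := by
      rw [hval]; push_cast; ring
    rw [heq] at hadj
    exact ⟨p.concat hadj.symm, by rw [SimpleGraph.Walk.length_concat, hp]⟩

/-- Stepping back along a used generator gives a neighbour at distance `l - 1`. -/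
lemma nbr_dist {n f : ℕ} (g : Fin f → ℤ) (hpos : ∀ i, 0 < g i)
    (hhalf : ∀ i, 2 * g i < n) (v : ZMod n) (l : ℕ) (hl : 1 ≤ l)
    (hdist : (circulant n g).dist 0 v = l) (a : Fin f → ℤ)
    (hnorm : ∑ i, (a i).natAbs = l) (hrep : ((∑ i, a i * g i : ℤ) : ZMod n) = v)
    (k : Fin f) (hak : a k ≠ 0) :
    (circulant n g).Adj v (v - (((a k).sign * g k : ℤ) : ZMod n)) ∧
      (circulant n g).dist 0 (v - (((a k).sign * g k : ℤ) : ZMod n)) = l - 1 := by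
  set s : ℤ := (a k).sign with hs
  have hs1 : s = 1 ∨ s = -1 := by
    rcases Int.lt_or_lt_of_ne hak with h | h
    · right; simp [hs, Int.sign_eq_neg_one_of_neg h]
    · left; simp [hs, Int.sign_eq_one_of_pos h]
  have hadj := adj_sub_sign g hpos hhalf v k s hs1
  refine ⟨hadj, ?_⟩
  set u : ZMod n := v - ((s * g k : ℤ) : ZMod n) with hu
  -- upper bound: walk of length l - 1
  set a' : Fin f → ℤ := Function.update a k (a k - s) with ha'
  have hsum : (∑ i, (a' i).natAbs) = l - 1 := by
    rw [ha', sum_update_comp a k (a k - s) (fun _ x => x.natAbs)]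
    have h1 : (a k - s).natAbs = (a k).natAbs - 1 := by
      rcases Int.lt_or_lt_of_ne hak with h | h
      · simp only [hs, Int.sign_eq_neg_one_of_neg h]; omega
      · simp only [hs, Int.sign_eq_one_of_pos h]; omega
    have h2 : (∑ i ∈ Finset.univ \ {k}, (a i).natAbs) + (a k).natAbs = l := by
      rw [← hnorm, Finset.sum_eq_sum_sdiff_singleton_add (Finset.mem_univ k)]
    have h3 : 1 ≤ (a k).natAbs := by omega
    omega
  have hval : (∑ i, a' i * g i : ℤ) = (∑ i, a i * g i : ℤ) - s * g k := by
    rw [ha', sum_update_comp a k (a k - s) (fun i x => x * g i),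
      Finset.sum_eq_sum_sdiff_singleton_add (Finset.mem_univ k) (fun i => a i * g i)]
    ring
  have hcast : ((∑ i, a' i * g i : ℤ) : ZMod n) = u := by
    rw [hval, hu, ← hrep]; push_cast; ring
  obtain ⟨p, hp⟩ := walk_of_rep g hpos hhalf (l - 1) a' hsum
  have hub : (circulant n g).dist 0 u ≤ l - 1 := by
    have := SimpleGraph.dist_le (p.copy rfl hcast)
    rwa [SimpleGraph.Walk.length_copy, hp] at this
  -- lower bound
  have hreach : (circulant n g).Reachable 0 u := ⟨p.copy rfl hcast⟩
  obtain ⟨q, hq⟩ := hreach.exists_walk_length_eq_dist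
  have hlb : l ≤ (circulant n g).dist 0 u + 1 := by
    have := SimpleGraph.dist_le (q.concat hadj.symm)
    rw [SimpleGraph.Walk.length_concat, hq, hdist] at this
    exact this
  omega

theorem stmt12 (n f : ℕ) (hn : 0 < n) (hf : 1 ≤ f) (g : Fin f → ℤ)
    (hpos : ∀ i, 0 < g i) (hmono : StrictMono g) (hhalf : ∀ i, 2 * g i < n)
    (v : ZMod n) (l : ℕ) (hl : 2 ≤ l) (hdist : (circulant n g).dist 0 v = l)
    (a : Fin f → ℤ) (hnorm : ∑ i, (a i).natAbs = l)
    (hrep : ((∑ i, a i * g i : ℤ) : ZMod n) = v)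
    (i j : Fin f) (hij : i ≠ j) (hai : a i ≠ 0) (haj : a j ≠ 0) :
    ∃ u₁ u₂ : ZMod n, u₁ ≠ u₂ ∧
      ((circulant n g).Adj v u₁ ∧ (circulant n g).dist 0 u₁ = l - 1) ∧
      ((circulant n g).Adj v u₂ ∧ (circulant n g).dist 0 u₂ = l - 1) := by
  have h1 := nbr_dist g hpos hhalf v l (by omega) hdist a hnorm hrep i hai
  have h2 := nbr_dist g hpos hhalf v l (by omega) hdist a hnorm hrep j haj
  refine ⟨_, _, ?_, h1, h2⟩
  intro h
  rw [sub_right_injective.eq_iff] at h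
  have hd : ((((a i).sign * g i - (a j).sign * g j : ℤ)) : ZMod n) = 0 := by
    push_cast at h ⊢
    rw [h]; ring
  have hgij : g i ≠ g j := fun he => hij (hmono.injective he)
  have hne : ((a i).sign * g i - (a j).sign * g j : ℤ) ≠ 0 := by
    have hgi := hpos i; have hgj := hpos j
    rcases Int.lt_or_lt_of_ne hai with h' | h' <;>
      rcases Int.lt_or_lt_of_ne haj with h'' | h'' <;>
      simp only [Int.sign_eq_neg_one_of_neg, Int.sign_eq_one_of_pos, h', h''] <;> omega
  have habs : |((a i).sign * g i - (a j).sign * g j : ℤ)| < n := by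
    have hgi := hpos i; have hgj := hpos j
    have hhi := hhalf i; have hhj := hhalf j
    rcases Int.lt_or_lt_of_ne hai with h' | h' <;>
      rcases Int.lt_or_lt_of_ne haj with h'' | h'' <;>
      simp only [Int.sign_eq_neg_one_of_neg, Int.sign_eq_one_of_pos, h', h''] <;>
      rw [abs_lt] <;> constructor <;> omega
  exact cast_ne_zero_of_abs_lt _ hne habs hd
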